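/- Let λ₁, ..., λ_d be real numbers and T_k = Σᵢ λᵢᵏ. Let M, M₁, M₂ be positive integers, α = 2/M − 1/(2M₁) − 1/(2M₂), β = 1/(2M²) − 1/(4M₁M₂). Assume β > 0 and α ≥ 4/(3M + βM⁴). Then for every real y, Q₂(y) := α y² T₂ + (4/M²) y T₃ + (3/M³) T₄ + β T₂² ≥ 0. -/

import Mathlib

theorem Q2_nonneg (d : ℕ) (lam : Fin d → ℝ) (M M₁ M₂ : ℕ)
    (hM : 1 ≤ M) (hM₁ : 1 ≤ M₁) (hM₂ : 1 ≤ M₂) (α β : ℝ)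
    (hα : α = 2 / (M : ℝ) - 1 / (2 * (M₁ : ℝ)) - 1 / (2 * (M₂ : ℝ)))
    (hβ : β = 1 / (2 * (M : ℝ) ^ 2) - 1 / (4 * (M₁ : ℝ) * (M₂ : ℝ)))
    (hβpos : 0 < β)
    (hαge : α ≥ 4 / (3 * (M : ℝ) + β * (M : ℝ) ^ 4)) (y : ℝ) :
    0 ≤ α * y ^ 2 * (∑ i, lam i ^ 2)
      + (4 / (M : ℝ) ^ 2) * y * (∑ i, lam i ^ 3)
      + (3 / (M : ℝ) ^ 3) * (∑ i, lam i ^ 4)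
      + β * (∑ i, lam i ^ 2) ^ 2 := by
  have hMpos : (0 : ℝ) < (M : ℝ) := by exact_mod_cast hM
  have hD : (0 : ℝ) < 3 * (M : ℝ) + β * (M : ℝ) ^ 4 := by positivity
  have hαpos : 0 < α := lt_of_lt_of_le (by positivity) hαge
  have hkey : α * (3 * (M : ℝ) + β * (M : ℝ) ^ 4) ≥ 4 := by
    rw [ge_iff_le, div_le_iff₀ hD] at hαge; linarith
  -- pointwise nonnegativity
  have hpt : ∀ i, 0 ≤ α * y ^ 2 * lam i ^ 2 + (4 / (M : ℝ) ^ 2) * y * lam i ^ 3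
      + (3 / (M : ℝ) ^ 3 + β) * lam i ^ 4 := by
    intro i
    have hb : (4 / (M : ℝ) ^ 2) ^ 2 ≤ 4 * α * (3 / (M : ℝ) ^ 3 + β) := by
      rw [div_pow]
      rw [div_le_iff₀ (by positivity)]
      have : (3 / (M : ℝ) ^ 3 + β) * (M : ℝ) ^ 4 = (3 * (M : ℝ) + β * (M : ℝ) ^ 4) := by
        field_simp
      nlinarith [hkey]
    nlinarith [sq_nonneg (2 * α * y * lam i + (4 / (M : ℝ) ^ 2) * lam i ^ 2),
      sq_nonneg (lam i), mul_pos hαpos hαpos, sq_nonneg (lam i ^ 2),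
      mul_nonneg (mul_nonneg hαpos.le (sq_nonneg y)) (sq_nonneg (lam i))]
  have hsum : 0 ≤ ∑ i, (α * y ^ 2 * lam i ^ 2 + (4 / (M : ℝ) ^ 2) * y * lam i ^ 3
      + (3 / (M : ℝ) ^ 3 + β) * lam i ^ 4) :=
    Finset.sum_nonneg fun i _ => hpt i
  have hT4 : ∑ i, lam i ^ 4 ≤ (∑ i, lam i ^ 2) ^ 2 := by
    have := Finset.sum_sq_le_sq_sum_of_nonneg (s := Finset.univ)
      (f := fun i => lam i ^ 2) (fun i _ => sq_nonneg _)
    calc ∑ i, lam i ^ 4 = ∑ i, (lam i ^ 2) ^ 2 := by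
          apply Finset.sum_congr rfl; intro i _; ring
      _ ≤ (∑ i, lam i ^ 2) ^ 2 := this
  have hexp : ∑ i, (α * y ^ 2 * lam i ^ 2 + (4 / (M : ℝ) ^ 2) * y * lam i ^ 3
      + (3 / (M : ℝ) ^ 3 + β) * lam i ^ 4)
      = α * y ^ 2 * (∑ i, lam i ^ 2) + (4 / (M : ℝ) ^ 2) * y * (∑ i, lam i ^ 3)
      + (3 / (M : ℝ) ^ 3) * (∑ i, lam i ^ 4) + β * (∑ i, lam i ^ 4) := by
    simp only [Finset.mul_sum, ← Finset.sum_add_distrib]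
    exact Finset.sum_congr rfl fun i _ => by ring
  nlinarith [hsum, hT4, hexp, hβpos]
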